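/- Let R > 0 and let f : [0, R] → ℝ be a nonnegative, nonincreasing function. Let c₀ > 0, α > 0, β > 1 and S̃ ≥ 0 be constants such that f(ξ) ≤ c₀ · (ξ − η)^{−α} · ( f(η) + S̃ · (R − η)^{α/(β−1)} )^β for all 0 ≤ η < ξ ≤ R. Assume in addition that R^{α/(β−1)} ≥ ( 2^{β(α+β−1)/(β−1)} · c₀ )^{1/(β−1)} · ( f(0) + S̃ · R^{α/(β−1)} ). Then f(R) = 0. -/

import Mathlib

/-- Inhomogeneous Stampacchia-type iteration lemma. -/
theorem inhomogeneous_stampacchia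
    (R c₀ α β S' : ℝ) (f : ℝ → ℝ)
    (hR : 0 < R) (hc₀ : 0 < c₀) (hα : 0 < α) (hβ : 1 < β) (hS : 0 ≤ S')
    (hnonneg : ∀ x, 0 ≤ x → x ≤ R → 0 ≤ f x)
    (hmono : ∀ x y, 0 ≤ x → x ≤ y → y ≤ R → f y ≤ f x)
    (hiter : ∀ η ξ, 0 ≤ η → η < ξ → ξ ≤ R →
      f ξ ≤ c₀ * (ξ - η) ^ (-α) * (f η + S' * (R - η) ^ (α / (β - 1))) ^ β)
    (hsize : (2 ^ (β * (α + β - 1) / (β - 1)) * c₀) ^ (1 / (β - 1)) *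
        (f 0 + S' * R ^ (α / (β - 1))) ≤ R ^ (α / (β - 1))) :
    f R = 0 := by
  have hβ1 : (0:ℝ) < β - 1 := by linarith
  set γ := α / (β - 1) with hγ
  have hγpos : 0 < γ := div_pos hα hβ1
  have hγβ1 : γ * (β - 1) = α := by rw [hγ]; exact div_mul_cancel₀ α (ne_of_gt hβ1)
  have hγβ : γ * β = α + γ := by nlinarith
  have hRγ : (0:ℝ) < R ^ γ := Real.rpow_pos_of_pos hR γ
  have hf0 : 0 ≤ f 0 := hnonneg 0 le_rfl hR.le
  set M := f 0 + S' * R ^ γ with hM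
  clear_value γ M
  have hMnn : 0 ≤ M := by rw [hM]; positivity
  have hfR : 0 ≤ f R := hnonneg R hR.le le_rfl
  rcases eq_or_lt_of_le hMnn with hM0 | hMpos
  · -- M = 0
    have h1 : f 0 + S' * (R - 0) ^ γ = 0 := by rw [sub_zero, ← hM, ← hM0]
    have h2 := hiter 0 R le_rfl hR le_rfl
    rw [h1] at h2
    have hb0 : (0:ℝ) ^ β = 0 := Real.zero_rpow (by positivity)
    have : f R ≤ 0 := by simpa [hb0] using h2
    linarith
  · have two_pos' : (0:ℝ) < 2 := by norm_num
    have hexp : β * (α + β - 1) / (β - 1) = α + β + γ := by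
      rw [hγ]; field_simp; ring
    have hkey : c₀ * 2 ^ (α + β + γ) * M ^ (β - 1) ≤ R ^ α := by
      have hC : (0:ℝ) < 2 ^ (β * (α + β - 1) / (β - 1)) * c₀ := by positivity
      have h1 := Real.rpow_le_rpow (by positivity) hsize hβ1.le
      rw [Real.mul_rpow (by positivity) hMpos.le] at h1
      rw [← Real.rpow_mul hC.le, one_div, inv_mul_cancel₀ (ne_of_gt hβ1),
          Real.rpow_one] at h1
      rw [← Real.rpow_mul hR.le, hγβ1] at h1
      calc c₀ * 2 ^ (α + β + γ) * M ^ (β - 1)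
          = 2 ^ (β * (α + β - 1) / (β - 1)) * c₀ * M ^ (β - 1) := by
            rw [hexp]; ring
        _ ≤ R ^ α := h1
    have hu : ∀ k : ℕ, (0:ℝ) < 2 ^ (-(k:ℝ)) :=
      fun k => Real.rpow_pos_of_pos two_pos' _
    have hu1 : ∀ k : ℕ, (2:ℝ) ^ (-(k:ℝ)) ≤ 1 := fun k =>
      Real.rpow_le_one_of_one_le_of_nonpos (by norm_num)
        (neg_nonpos.mpr (Nat.cast_nonneg k))
    -- scalar inequality h2
    have hRα : (0:ℝ) < R ^ α := Real.rpow_pos_of_pos hR α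
    have h2γ : (0:ℝ) < (2:ℝ) ^ γ := Real.rpow_pos_of_pos two_pos' γ
    have e1 : M ^ β = M ^ (β - 1) * M := by
      conv_lhs => rw [show β = (β - 1) + 1 by ring]
      rw [Real.rpow_add hMpos, Real.rpow_one]
    have e2 : (2:ℝ) ^ (α + β + γ) = 2 ^ (α + β) * 2 ^ γ := Real.rpow_add two_pos' _ _
    have h2 : c₀ * 2 ^ (α + β) * M ^ β * R ^ (-α) ≤ M * 2 ^ (-γ) := by
      rw [Real.rpow_neg hR.le, Real.rpow_neg two_pos'.le, e1,
          ← div_eq_mul_inv, ← div_eq_mul_inv, div_le_div_iff₀ hRα h2γ]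
      calc c₀ * 2 ^ (α + β) * (M ^ (β - 1) * M) * 2 ^ γ
          = c₀ * 2 ^ (α + β + γ) * M ^ (β - 1) * M := by rw [e2]; ring
        _ ≤ R ^ α * M := mul_le_mul_of_nonneg_right hkey hMpos.le
        _ = M * R ^ α := mul_comm _ _
    have main : ∀ k : ℕ, f (R - R * 2 ^ (-(k:ℝ))) ≤ M * 2 ^ (-(k:ℝ) * γ) := by
      intro k
      induction k with
      | zero =>
        have hz : R - R * 2 ^ (-((0:ℕ):ℝ)) = 0 := by norm_num
        have hz2 : (-((0:ℕ):ℝ)) * γ = 0 := by norm_num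
        rw [hz, hz2, Real.rpow_zero, mul_one, hM]
        nlinarith [mul_nonneg hS hRγ.le]
      | succ k ih =>
        set a : ℝ := (k:ℝ) with ha
        clear_value a
        have hcast : ((k+1 : ℕ):ℝ) = a + 1 := by rw [ha]; push_cast; ring
        rw [hcast]
        have hua : (0:ℝ) < 2 ^ (-a) := Real.rpow_pos_of_pos two_pos' _
        have hua1 : (2:ℝ) ^ (-a) ≤ 1 :=
          Real.rpow_le_one_of_one_le_of_nonpos (by norm_num)
            (neg_nonpos.mpr (by rw [ha]; positivity))
        have hub : (0:ℝ) < 2 ^ (-(a+1)) := Real.rpow_pos_of_pos two_pos' _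
        have hhalf : (2:ℝ) ^ (-a) = 2 * 2 ^ (-(a+1)) := by
          rw [show (-a) = 1 + (-(a+1)) by ring, Real.rpow_add two_pos', Real.rpow_one]
        set η : ℝ := R - R * 2 ^ (-a) with hη
        set ξ : ℝ := R - R * 2 ^ (-(a+1)) with hξ
        clear_value η ξ
        have hη0 : 0 ≤ η := by
          rw [hη]; linarith only [mul_le_mul_of_nonneg_left hua1 hR.le]
        have h6 : (2:ℝ) ^ (-(a+1)) < 2 ^ (-a) :=
          Real.rpow_lt_rpow_of_exponent_lt (by norm_num) (by linarith only [])
        have hηξ : η < ξ := by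
          rw [hη, hξ]; linarith only [mul_lt_mul_of_pos_left h6 hR]
        have hξR : ξ ≤ R := by
          rw [hξ]; linarith only [mul_pos hR hub]
        have hit := hiter η ξ hη0 hηξ hξR
        have hξη : ξ - η = R * 2 ^ (-(a+1)) := by rw [hη, hξ, hhalf]; ring
        have hRη : R - η = R * 2 ^ (-a) := by rw [hη]; ring
        rw [hξη, hRη] at hit
        have hinner : f η + S' * (R * 2 ^ (-a)) ^ γ ≤ 2 * M * 2 ^ (-a * γ) := by
          have e3 : (R * 2 ^ (-a)) ^ γ = R ^ γ * 2 ^ (-a * γ) := by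
            rw [Real.mul_rpow hR.le hua.le, ← Real.rpow_mul two_pos'.le]
          have hSM : S' * R ^ γ ≤ M := by rw [hM]; linarith
          have hpw : (0:ℝ) < 2 ^ (-a * γ) := Real.rpow_pos_of_pos two_pos' _
          have h4 := mul_le_mul_of_nonneg_right hSM hpw.le
          rw [e3]; linarith only [ih, h4]
        have hfη : 0 ≤ f η := hnonneg η hη0 (by linarith)
        have hpow : (f η + S' * (R * 2 ^ (-a)) ^ γ) ^ β ≤ (2 * M * 2 ^ (-a * γ)) ^ β :=
          Real.rpow_le_rpow (by positivity) hinner (by positivity)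
        have hstep : f ξ ≤ c₀ * (R * 2 ^ (-(a+1))) ^ (-α) * (2 * M * 2 ^ (-a * γ)) ^ β := by
          refine hit.trans ?_
          apply mul_le_mul_of_nonneg_left hpow
          positivity
        have hdecomp : c₀ * (R * 2 ^ (-(a+1))) ^ (-α) * (2 * M * 2 ^ (-a * γ)) ^ β
            = (c₀ * 2 ^ (α + β) * M ^ β * R ^ (-α)) * 2 ^ (-(a+1) * γ) * 2 ^ γ := by
          rw [Real.mul_rpow hR.le hub.le,
              Real.mul_rpow (by positivity : (0:ℝ) ≤ 2 * M)
                (Real.rpow_pos_of_pos two_pos' (-a * γ)).le,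
              Real.mul_rpow (by norm_num : (0:ℝ) ≤ 2) hMpos.le,
              ← Real.rpow_mul two_pos'.le, ← Real.rpow_mul two_pos'.le]
          calc c₀ * (R ^ (-α) * 2 ^ (-(a+1) * -α)) * (2 ^ β * M ^ β * 2 ^ (-a * γ * β))
              = c₀ * M ^ β * R ^ (-α) * (2 ^ (-(a+1) * -α) * (2 ^ β * 2 ^ (-a * γ * β))) := by
                ring
            _ = c₀ * M ^ β * R ^ (-α) * (2 ^ (-(a+1) * -α) * 2 ^ (β + -a * γ * β)) := by
                rw [← Real.rpow_add two_pos']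
            _ = c₀ * M ^ β * R ^ (-α) * 2 ^ (-(a+1) * -α + (β + -a * γ * β)) := by
                rw [← Real.rpow_add two_pos']
            _ = c₀ * M ^ β * R ^ (-α) * 2 ^ (α + β + (-(a+1) * γ + γ)) := by
                rw [show -(a+1) * -α + (β + -a * γ * β) = α + β + (-(a+1) * γ + γ) from by
                  linear_combination (-a) * hγβ]
            _ = c₀ * M ^ β * R ^ (-α) * (2 ^ (α + β) * (2 ^ (-(a+1) * γ) * 2 ^ γ)) := by
                rw [Real.rpow_add two_pos' (α + β), Real.rpow_add two_pos' (-(a+1) * γ)]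
            _ = (c₀ * 2 ^ (α + β) * M ^ β * R ^ (-α)) * 2 ^ (-(a+1) * γ) * 2 ^ γ := by
                ring
        have hfin : c₀ * (R * 2 ^ (-(a+1))) ^ (-α) * (2 * M * 2 ^ (-a * γ)) ^ β
            ≤ M * 2 ^ (-(a+1) * γ) := by
          rw [hdecomp]
          have hp : (0:ℝ) < 2 ^ (-(a+1) * γ) := Real.rpow_pos_of_pos two_pos' _
          have h3 := mul_le_mul_of_nonneg_right h2 (mul_nonneg hp.le h2γ.le)
          calc c₀ * 2 ^ (α + β) * M ^ β * R ^ (-α) * 2 ^ (-(a+1) * γ) * 2 ^ γ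
              = c₀ * 2 ^ (α + β) * M ^ β * R ^ (-α) * (2 ^ (-(a+1) * γ) * 2 ^ γ) := by ring
            _ ≤ M * 2 ^ (-γ) * (2 ^ (-(a+1) * γ) * 2 ^ γ) := h3
            _ = M * 2 ^ (-(a+1) * γ) * (2 ^ (-γ) * 2 ^ γ) := by ring
            _ = M * 2 ^ (-(a+1) * γ) := by
                rw [← Real.rpow_add two_pos']; norm_num
        exact hstep.trans hfin
    have hfRk : ∀ k : ℕ, f R ≤ M * 2 ^ (-(k:ℝ) * γ) := by
      intro k
      refine le_trans (hmono _ R ?_ ?_ le_rfl) (main k)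
      · linarith only [mul_le_mul_of_nonneg_left (hu1 k) hR.le]
      · linarith only [mul_pos hR (hu k)]
    have hT : Filter.Tendsto (fun k : ℕ => M * 2 ^ (-(k:ℝ) * γ)) Filter.atTop (nhds 0) := by
      have he : ∀ k : ℕ, M * ((2:ℝ) ^ (-γ)) ^ k = M * 2 ^ (-(k:ℝ) * γ) := by
        intro k
        rw [← Real.rpow_natCast ((2:ℝ) ^ (-γ)) k, ← Real.rpow_mul two_pos'.le,
          show -γ * (k:ℝ) = -(k:ℝ) * γ by ring]
      have hlt : |(2:ℝ) ^ (-γ)| < 1 := by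
        rw [abs_of_pos (Real.rpow_pos_of_pos two_pos' _)]
        exact Real.rpow_lt_one_of_one_lt_of_neg (by norm_num) (by linarith)
      have h5 := (tendsto_pow_atTop_nhds_zero_of_abs_lt_one hlt).const_mul M
      rw [mul_zero] at h5
      exact h5.congr he
    have : f R ≤ 0 := ge_of_tendsto hT (Filter.Eventually.of_forall hfRk)
    linarith
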